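/- Let n ≥ 5 and set Ŝ := E_{n−1}E_{n−2}⋯E₂E₁. The following relations hold in Aut H_n: S = E₁E₂⋯E_{n−1}; E_i^S = E_{i+1} for all i; S^n = 1; Ŝ^n = 1; S Ŝ S Ŝ = 1; I_{r_n} = S Ŝ; I_{r₁} = E₁E₂⋯E_{n−1}E_nE_{n−1}⋯E₃E₂; E_i E_{i+1} E_i = E_{i+1} E_i E_{i+1} for all i; E_i E_j = E_j E_i whenever the sets {i−1, i} and {j−1, j} of residues modulo n are disjoint; E_i^J = E_{n+1−i}^{−1} for all i; and J² = 1. In particular, every inner automorphism of H_n lies in Aut⁺H_n. -/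

import Mathlib

noncomputable section
open Matrix Complex
namespace HView

abbrev W : Type := Fin 2 → ℂ

def herm (x y : W) : ℂ := x 0 * (starRingEnd ℂ) (y 0) - x 1 * (starRingEnd ℂ) (y 1)

def IsNeg (p : W) : Prop := p ≠ 0 ∧ (herm p p).re < 0
def IsIso (p : W) : Prop := p ≠ 0 ∧ herm p p = 0
def IsNonpos (p : W) : Prop := p ≠ 0 ∧ (herm p p).re ≤ 0

def triArea (p₁ p₂ p₃ : W) : ℝ :=
  2 * Complex.arg (-(herm p₁ p₂ * herm p₂ p₃ * herm p₃ p₁))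

def Jm : Matrix (Fin 2) (Fin 2) ℂ := !![1, 0; 0, -1]

def SU11 : Subgroup (SpecialLinearGroup (Fin 2) ℂ) where
  carrier := {A | (A : Matrix (Fin 2) (Fin 2) ℂ)ᴴ * Jm * (A : Matrix (Fin 2) (Fin 2) ℂ) = Jm}
  one_mem' := by simp
  mul_mem' := by
    intro A B hA hB
    simp only [Set.mem_setOf_eq] at hA hB ⊢
    have hco : ((A * B : SpecialLinearGroup (Fin 2) ℂ) : Matrix (Fin 2) (Fin 2) ℂ)
        = (A : Matrix (Fin 2) (Fin 2) ℂ) * (B : Matrix (Fin 2) (Fin 2) ℂ) := rfl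
    rw [hco, conjTranspose_mul]
    calc (B : Matrix (Fin 2) (Fin 2) ℂ)ᴴ * (A : Matrix (Fin 2) (Fin 2) ℂ)ᴴ * Jm *
          ((A : Matrix (Fin 2) (Fin 2) ℂ) * (B : Matrix (Fin 2) (Fin 2) ℂ))
        = (B : Matrix (Fin 2) (Fin 2) ℂ)ᴴ *
          ((A : Matrix (Fin 2) (Fin 2) ℂ)ᴴ * Jm * (A : Matrix (Fin 2) (Fin 2) ℂ)) *
          (B : Matrix (Fin 2) (Fin 2) ℂ) := by noncomm_ring
      _ = Jm := by rw [hA]; exact hB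
  inv_mem' := by
    intro A hA
    simp only [Set.mem_setOf_eq] at hA ⊢
    have h1 : (A : Matrix (Fin 2) (Fin 2) ℂ) *
        ((A⁻¹ : SpecialLinearGroup (Fin 2) ℂ) : Matrix (Fin 2) (Fin 2) ℂ) = 1 := by
      rw [← Matrix.SpecialLinearGroup.coe_mul, mul_inv_cancel,
        Matrix.SpecialLinearGroup.coe_one]
    have h2 : ((A⁻¹ : SpecialLinearGroup (Fin 2) ℂ) : Matrix (Fin 2) (Fin 2) ℂ)ᴴ *
        (A : Matrix (Fin 2) (Fin 2) ℂ)ᴴ = 1 := by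
      rw [← conjTranspose_mul, h1, conjTranspose_one]
    calc ((A⁻¹ : SpecialLinearGroup (Fin 2) ℂ) : Matrix (Fin 2) (Fin 2) ℂ)ᴴ * Jm *
          ((A⁻¹ : SpecialLinearGroup (Fin 2) ℂ) : Matrix (Fin 2) (Fin 2) ℂ)
        = ((A⁻¹ : SpecialLinearGroup (Fin 2) ℂ) : Matrix (Fin 2) (Fin 2) ℂ)ᴴ *
          ((A : Matrix (Fin 2) (Fin 2) ℂ)ᴴ * Jm * (A : Matrix (Fin 2) (Fin 2) ℂ)) *
          ((A⁻¹ : SpecialLinearGroup (Fin 2) ℂ) : Matrix (Fin 2) (Fin 2) ℂ) := by rw [hA]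
      _ = (((A⁻¹ : SpecialLinearGroup (Fin 2) ℂ) : Matrix (Fin 2) (Fin 2) ℂ)ᴴ *
            (A : Matrix (Fin 2) (Fin 2) ℂ)ᴴ) * Jm *
          ((A : Matrix (Fin 2) (Fin 2) ℂ) *
            ((A⁻¹ : SpecialLinearGroup (Fin 2) ℂ) : Matrix (Fin 2) (Fin 2) ℂ)) := by noncomm_ring
      _ = Jm := by rw [h1, h2, one_mul, mul_one]


instance : Fact (Even (Fintype.card (Fin 2))) := ⟨by decide⟩

def negOne : SU11 := ⟨-1, by
  show ((-1 : SpecialLinearGroup (Fin 2) ℂ) : Matrix (Fin 2) (Fin 2) ℂ)ᴴ * Jm *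
    ((-1 : SpecialLinearGroup (Fin 2) ℂ) : Matrix (Fin 2) (Fin 2) ℂ) = Jm
  simp⟩

lemma negOne_mul_negOne : negOne * negOne = 1 := by
  apply Subtype.ext
  show ((-1 : SpecialLinearGroup (Fin 2) ℂ)) * (-1) = 1
  apply Subtype.ext
  show ((-1 : Matrix (Fin 2) (Fin 2) ℂ)) * (-1) = 1
  simp

lemma negOne_central (g : SU11) : g * negOne = negOne * g := by
  apply Subtype.ext
  apply Subtype.ext
  show ((g : SpecialLinearGroup (Fin 2) ℂ) : Matrix (Fin 2) (Fin 2) ℂ) * (-1)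
      = (-1) * ((g : SpecialLinearGroup (Fin 2) ℂ) : Matrix (Fin 2) (Fin 2) ℂ)
  simp

def pm1 : Subgroup SU11 where
  carrier := {1, negOne}
  one_mem' := Or.inl rfl
  mul_mem' := by
    rintro a b (rfl | ha) (rfl | hb)
    · exact Or.inl (one_mul 1)
    · rw [Set.mem_singleton_iff] at hb; subst hb
      exact Or.inr (by rw [one_mul]; rfl)
    · rw [Set.mem_singleton_iff] at ha; subst ha
      exact Or.inr (by rw [mul_one]; rfl)
    · rw [Set.mem_singleton_iff] at ha hb; subst ha; subst hb
      exact Or.inl negOne_mul_negOne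
  inv_mem' := by
    rintro a (rfl | ha)
    · exact Or.inl inv_one
    · rw [Set.mem_singleton_iff] at ha; subst ha
      refine Or.inr ?_
      rw [Set.mem_singleton_iff, inv_eq_iff_mul_eq_one, negOne_mul_negOne]

instance pm1_normal : pm1.Normal := by
  constructor
  intro x hx g
  rcases hx with rfl | hx
  · simpa using pm1.one_mem
  · rw [Set.mem_singleton_iff] at hx; subst hx
    have h : g * negOne * g⁻¹ = negOne := by
      rw [negOne_central, mul_assoc, mul_inv_cancel, mul_one]
    rw [h]
    exact Or.inr rfl

abbrev PU11 := SU11 ⧸ pm1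

def mobius (A : SU11) (z : ℂ) : ℂ :=
  (((A : SpecialLinearGroup (Fin 2) ℂ) : Matrix (Fin 2) (Fin 2) ℂ) 0 0 * z +
    ((A : SpecialLinearGroup (Fin 2) ℂ) : Matrix (Fin 2) (Fin 2) ℂ) 0 1) /
  (((A : SpecialLinearGroup (Fin 2) ℂ) : Matrix (Fin 2) (Fin 2) ℂ) 1 0 * z +
    ((A : SpecialLinearGroup (Fin 2) ℂ) : Matrix (Fin 2) (Fin 2) ℂ) 1 1)

lemma mobius_mul_negOne (A : SU11) (z : ℂ) : mobius (A * negOne) z = mobius A z := by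
  have hm : (((A * negOne : SU11) : SpecialLinearGroup (Fin 2) ℂ) : Matrix (Fin 2) (Fin 2) ℂ)
      = -(((A : SpecialLinearGroup (Fin 2) ℂ) : Matrix (Fin 2) (Fin 2) ℂ)) := by
    show ((A : SpecialLinearGroup (Fin 2) ℂ) : Matrix (Fin 2) (Fin 2) ℂ) *
      (-1 : Matrix (Fin 2) (Fin 2) ℂ) = _
    simp
  set M := ((A : SpecialLinearGroup (Fin 2) ℂ) : Matrix (Fin 2) (Fin 2) ℂ) with hM
  unfold mobius
  rw [hm]
  simp only [Matrix.neg_apply]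
  rw [show -M 0 0 * z + -M 0 1 = -(M 0 0 * z + M 0 1) by ring,
    show -M 1 0 * z + -M 1 1 = -(M 1 0 * z + M 1 1) by ring, neg_div_neg_eq]

def pact (g : PU11) : ℂ → ℂ :=
  Quotient.liftOn' g (fun A => mobius A) (by
    intro a b hab
    have hab' : a⁻¹ * b ∈ pm1 := QuotientGroup.leftRel_apply.mp hab
    have key : b = a ∨ b = a * negOne := by
      rcases hab' with h | h
      · left
        have : a⁻¹ * b = 1 := h
        rw [inv_mul_eq_one] at this
        exact this.symm
      · right
        rw [Set.mem_singleton_iff] at h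
        rw [inv_mul_eq_iff_eq_mul] at h
        exact h
    funext z
    rcases key with rfl | rfl
    · rfl
    · exact (mobius_mul_negOne a z).symm)

lemma pact_mk (A : SU11) (z : ℂ) : pact (QuotientGroup.mk A : PU11) z = mobius A z := rfl


instance : TopologicalSpace (SpecialLinearGroup (Fin 2) ℂ) :=
  instTopologicalSpaceSubtype

def IsHyperbolic (g : PU11) : Prop :=
  ∃ A : SU11, (QuotientGroup.mk A : PU11) = g ∧
    (Matrix.trace ((A : SpecialLinearGroup (Fin 2) ℂ) : Matrix (Fin 2) (Fin 2) ℂ)).im = 0 ∧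
    2 < |(Matrix.trace ((A : SpecialLinearGroup (Fin 2) ℂ) : Matrix (Fin 2) (Fin 2) ℂ)).re|

def IsAttractor (g : PU11) (z : ℂ) : Prop :=
  ‖z‖ = 1 ∧ ∃ A : SU11, (QuotientGroup.mk A : PU11) = g ∧
    ∃ lam : ℂ, 1 < ‖lam‖ ∧
      ((A : SpecialLinearGroup (Fin 2) ℂ) : Matrix (Fin 2) (Fin 2) ℂ).mulVec ![z, 1]
        = lam • ![z, 1]

def IsRepeller (g : PU11) (z : ℂ) : Prop :=
  ‖z‖ = 1 ∧ ∃ A : SU11, (QuotientGroup.mk A : PU11) = g ∧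
    ∃ lam : ℂ, ‖lam‖ < 1 ∧
      ((A : SpecialLinearGroup (Fin 2) ℂ) : Matrix (Fin 2) (Fin 2) ℂ).mulVec ![z, 1]
        = lam • ![z, 1]

def IsPositiveCycle (l : List ℂ) : Prop :=
  3 ≤ l.length ∧ ∃ t : Fin l.length → ℝ,
    StrictMono t ∧ (∀ j k : Fin l.length, t j - t k < 2 * Real.pi) ∧
    ∀ j : Fin l.length, l.get j = Complex.exp (Complex.I * (t j : ℂ))

def IsNegativeCycle (l : List ℂ) : Prop :=
  3 ≤ l.length ∧ ∃ t : Fin l.length → ℝ,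
    StrictAnti t ∧ (∀ j k : Fin l.length, t j - t k < 2 * Real.pi) ∧
    ∀ j : Fin l.length, l.get j = Complex.exp (Complex.I * (t j : ℂ))

def longRel (n : ℕ) : FreeGroup (ZMod n) :=
  (((List.range n).map (fun k => FreeGroup.of ((k + 1 : ℕ) : ZMod n))).reverse).prod

def Hrels (n : ℕ) : Set (FreeGroup (ZMod n)) :=
  {x | ∃ i : ZMod n, x = FreeGroup.of i * FreeGroup.of i} ∪ {longRel n}

abbrev H (n : ℕ) := PresentedGroup (Hrels n)

def r (n : ℕ) (i : ZMod n) : H n := PresentedGroup.of i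

def pts {n : ℕ} (A : ZMod n → SU11) (p : W) : ℕ → W
  | 0 => p
  | (k+1) => (((A ((k + 1 : ℕ) : ZMod n) : SpecialLinearGroup (Fin 2) ℂ)
      : Matrix (Fin 2) (Fin 2) ℂ)).mulVec (pts A p k)

def IsLift {n : ℕ} (ρ : H n →* PU11) (A : ZMod n → SU11) : Prop :=
  (∀ i : ZMod n, (QuotientGroup.mk (A i) : PU11) = ρ (r n i)) ∧
  ((((List.range n).map (fun k => A ((k + 1 : ℕ) : ZMod n))).reverse).prod = 1 ∨
   (((List.range n).map (fun k => A ((k + 1 : ℕ) : ZMod n))).reverse).prod = negOne)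

def areaRep (n : ℕ) (A : ZMod n → SU11) (c p : W) : ℝ :=
  ∑ i ∈ Finset.range n, triArea c (pts A p (i + 1)) (pts A p (i + 2))

def HasArea {n : ℕ} (ρ : H n →* PU11) (a : ℝ) : Prop :=
  ∀ A : ZMod n → SU11, IsLift ρ A → ∀ c p : W, IsNeg c → IsNeg p → areaRep n A c p = a

def orbitSeq {n : ℕ} (ρ : H n →* PU11) (j : ZMod n) (z : ℂ) : ℕ → ℂ
  | 0 => z
  | (k+1) => pact (ρ (r n (j + (k : ℕ)))) (orbitSeq ρ j z k)

def iCycle {n : ℕ} (ρ : H n →* PU11) (i : ZMod n) (b e : ℂ) : List ℂ :=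
  ((List.range (n - 2)).map (fun k => [orbitSeq ρ (i + 1) b k, orbitSeq ρ (i + 1) e k])).flatten

def IsReflection (g : PU11) (q : W) : Prop :=
  ∃ A : SU11, (QuotientGroup.mk A : PU11) = g ∧
    ∀ x : W, ((A : SpecialLinearGroup (Fin 2) ℂ) : Matrix (Fin 2) (Fin 2) ℂ).mulVec x
      = Complex.I • (x - (2 * herm x q / herm q q) • q)

def Gsub (n : ℕ) : Subgroup (H n) :=
  Subgroup.closure {x : H n | ∃ i j : ZMod n, x = r n i * r n j}

lemma rr_mem (n : ℕ) (i j : ZMod n) : r n i * r n j ∈ Gsub n :=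
  Subgroup.subset_closure ⟨i, j, rfl⟩

lemma rrrr_mem (n : ℕ) (i j k l : ZMod n) :
    r n i * r n j * r n k * r n l ∈ Gsub n := by
  have h : r n i * r n j * r n k * r n l = (r n i * r n j) * (r n k * r n l) := by
    rw [mul_assoc]
  rw [h]
  exact mul_mem (rr_mem n i j) (rr_mem n k l)

def v (n : ℕ) (k : ℕ) : H n :=
  (((List.range (k % n)).map (fun m => r n ((m + 1 : ℕ) : ZMod n))).reverse).prod

def w0 (n : ℕ) (i : ℕ) : H n := if Even i then v n i else v n i * r n 0

def w (n : ℕ) (j : ℕ) : H n :=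
  if j % (2 * n - 2) ≤ n - 2 then w0 n (j % (2 * n - 2))
  else r n 0 * w0 n (j % (2 * n - 2) - (n - 1)) * r n 0

def IsLiftGW {n : ℕ} (ρ : ↥(Gsub n) →* PU11) (u : ℕ → H n) (B : ℕ → SU11) : Prop :=
  ∀ (j : ℕ) (h : u j ∈ Gsub n), (QuotientGroup.mk (B j) : PU11) = ρ ⟨u j, h⟩

def areaG (n : ℕ) (B : ℕ → SU11) (c p q : W) : ℝ :=
  ∑ j ∈ Finset.range (2 * n - 2),
    triArea c
      (((B j : SpecialLinearGroup (Fin 2) ℂ) : Matrix (Fin 2) (Fin 2) ℂ).mulVec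
        (if Even j then p else q))
      (((B ((j + 1) % (2 * n - 2)) : SpecialLinearGroup (Fin 2) ℂ)
          : Matrix (Fin 2) (Fin 2) ℂ).mulVec
        (if Even ((j + 1) % (2 * n - 2)) then p else q))

def HasAreaG {n : ℕ} (ρ : ↥(Gsub n) →* PU11) (a : ℝ) : Prop :=
  ∀ B : ℕ → SU11, IsLiftGW ρ (w n) B →
    ∀ c p q : W, IsNeg c → IsNeg p → IsNeg q → areaG n B c p q = a

def bigCycle (n : ℕ) (s t s' t' : ZMod n → ℂ) (wd : ℕ → ℂ) : List ℂ :=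
  [t 1, s 2, wd 2] ++
  ((List.range (n - 4)).map
    (fun k => [s ((k + 3 : ℕ) : ZMod n), t ((k + 3 : ℕ) : ZMod n), wd (k + 3)])).flatten ++
  [t ((n - 1 : ℕ) : ZMod n), s ((n : ℕ) : ZMod n)] ++
  [s' 2, wd (n + 1)] ++
  ((List.range (n - 4)).map
    (fun k => [s' ((k + 3 : ℕ) : ZMod n), t' ((k + 3 : ℕ) : ZMod n), wd (n + k + 2)])).flatten ++
  [t' ((n - 1 : ℕ) : ZMod n)]

def IsSE {n : ℕ} (ρ ρ' : H n →* PU11) (i : ZMod n) (t : ℝ) : Prop :=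
  IsHyperbolic (ρ (r n i * r n (i - 1))) ∧
  ∃ φ : ℝ → PU11, Continuous φ ∧ (∀ s u : ℝ, φ (s + u) = φ s * φ u) ∧
    IsHyperbolic (φ 1) ∧ φ 1 * φ 1 = ρ (r n i * r n (i - 1)) ∧
    (∀ j : ZMod n, j ≠ i - 1 → j ≠ i → ρ' (r n j) = ρ (r n j)) ∧
    ρ' (r n (i - 1)) = φ t * ρ (r n (i - 1)) * (φ t)⁻¹ ∧
    ρ' (r n i) = φ t * ρ (r n i) * (φ t)⁻¹

def ConjRep {n : ℕ} (ρ ρ' : H n →* PU11) : Prop :=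
  ∃ g : PU11, ∀ h : H n, ρ' h = g * ρ h * g⁻¹

def NormalizedAt {n : ℕ} (ρ : H n →* PU11) (i : ZMod n) : Prop :=
  IsRepeller (ρ (r n i * r n (i - 1))) (-1) ∧
  IsAttractor (ρ (r n i * r n (i - 1))) 1 ∧
  pact (ρ (r n i)) 0 = 0

def PPlus {n : ℕ} (ρ : H n →* PU11) : Prop :=
  Function.Injective ρ ∧ DiscreteTopology (MonoidHom.range ρ) ∧
  HasArea ρ (((n : ℝ) - 4) * Real.pi)

def tupleAt {n : ℕ} (ρ : H n →* PU11) (i : ZMod n) : List ℂ :=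
  (iCycle ρ i (-1) 1).drop 2

def KPlusL (n : ℕ) (l : List ℂ) : Prop :=
  l.length = 2 * n - 6 ∧ (∀ z ∈ l, ‖z‖ = 1 ∧ 0 < z.im) ∧ IsPositiveCycle l

def PrelsList (n : ℕ) : Set (FreeGroup (ZMod n)) :=
  { ((List.range n).map (fun k => FreeGroup.of ((n - k : ℕ) : ZMod n))).prod,
    ((List.range (n / 2)).map (fun k => FreeGroup.of ((n - 2 * k : ℕ) : ZMod n))).prod,
    ((List.range (n / 2)).map (fun k => FreeGroup.of ((n - 1 - 2 * k : ℕ) : ZMod n))).prod }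

abbrev Pgrp (n : ℕ) := PresentedGroup (PrelsList n)

def gp (n : ℕ) (i : ZMod n) : Pgrp n := PresentedGroup.of i


lemma hrels_one {n : ℕ} {x : FreeGroup (ZMod n)} (hx : x ∈ Hrels n) :
    PresentedGroup.mk (Hrels n) x = 1 :=
  (QuotientGroup.eq_one_iff x).mpr (Subgroup.subset_normalClosure hx)

lemma r_sq (n : ℕ) (i : ZMod n) : r n i * r n i = 1 := by
  have h : PresentedGroup.mk (Hrels n) (FreeGroup.of i * FreeGroup.of i) = 1 :=
    hrels_one (Or.inl ⟨i, rfl⟩)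
  rwa [_root_.map_mul] at h

lemma r_inv (n : ℕ) (i : ZMod n) : (r n i)⁻¹ = r n i := by
  rw [inv_eq_iff_mul_eq_one]; exact r_sq n i

lemma r_cancel (n : ℕ) (i : ZMod n) (y : H n) : r n i * (r n i * y) = y := by
  rw [← mul_assoc, r_sq, one_mul]

def vl (n m : ℕ) : H n := (((List.range m).map (fun k => r n ((k+1:ℕ) : ZMod n))).reverse).prod

lemma vl_zero (n : ℕ) : vl n 0 = 1 := rfl

lemma vl_succ (n m : ℕ) : vl n (m+1) = r n ((m+1:ℕ) : ZMod n) * vl n m := by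
  unfold vl
  rw [List.range_succ, List.map_append, List.reverse_append]
  simp

lemma vl_n_eq_one (n : ℕ) : vl n n = 1 := by
  have h : PresentedGroup.mk (Hrels n) (longRel n) = 1 := hrels_one (Or.inr rfl)
  unfold longRel at h
  rw [_root_.map_list_prod, List.map_reverse, List.map_map] at h
  exact h

lemma vl_pred (n : ℕ) (hn : 5 ≤ n) : vl n (n-1) = r n 0 := by
  have e : n - 1 + 1 = n := by omega
  have h3 : ((n - 1 + 1 : ℕ) : ZMod n) = 0 := by rw [e]; exact ZMod.natCast_self n
  have h1 : r n ((n - 1 + 1 : ℕ) : ZMod n) * vl n (n-1) = 1 := by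
    rw [← vl_succ, e]; exact vl_n_eq_one n
  rw [h3] at h1
  calc vl n (n-1) = r n 0 * (r n 0 * vl n (n-1)) := (r_cancel n 0 _).symm
  _ = r n 0 * 1 := by rw [h1]
  _ = r n 0 := mul_one _

lemma aut_ext {n : ℕ} {f g : MulAut (H n)} (h : ∀ i : ZMod n, f (r n i) = g (r n i)) : f = g :=
  MulEquiv.toMonoidHom_injective (PresentedGroup.ext h)

lemma zmod_cast_ne {n a b : ℕ} (ha : a < n) (hb : b < n) (h : a ≠ b) :
    (a : ZMod n) ≠ (b : ZMod n) := by
  haveI : NeZero n := ⟨by omega⟩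
  intro hc
  exact h (by rw [← ZMod.val_natCast_of_lt ha, ← ZMod.val_natCast_of_lt hb, hc])

lemma zmod_one_ne_zero {n : ℕ} (hn : 5 ≤ n) : (1 : ZMod n) ≠ 0 := by
  have := zmod_cast_ne (n := n) (a := 1) (b := 0) (by omega) (by omega) (by omega)
  simpa using this

lemma zmod_two_ne_zero {n : ℕ} (hn : 5 ≤ n) : (2 : ZMod n) ≠ 0 := by
  have := zmod_cast_ne (n := n) (a := 2) (b := 0) (by omega) (by omega) (by omega)
  simpa using this

def Pm {n : ℕ} (E : ZMod n → MulAut (H n)) (m : ℕ) : MulAut (H n) :=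
  ((List.range m).map (fun k => E ((k+1:ℕ) : ZMod n))).prod

def Qm {n : ℕ} (E : ZMod n → MulAut (H n)) (m : ℕ) : MulAut (H n) :=
  (((List.range m).map (fun k => E ((k+1:ℕ) : ZMod n))).reverse).prod

lemma Pm_zero {n : ℕ} (E : ZMod n → MulAut (H n)) : Pm E 0 = 1 := rfl

lemma Qm_zero {n : ℕ} (E : ZMod n → MulAut (H n)) : Qm E 0 = 1 := rfl

lemma Pm_succ {n : ℕ} (E : ZMod n → MulAut (H n)) (m : ℕ) :
    Pm E (m+1) = Pm E m * E ((m+1:ℕ) : ZMod n) := by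
  unfold Pm; rw [List.range_succ, List.map_append]; simp

lemma Qm_succ {n : ℕ} (E : ZMod n → MulAut (H n)) (m : ℕ) :
    Qm E (m+1) = E ((m+1:ℕ) : ZMod n) * Qm E m := by
  unfold Qm; rw [List.range_succ, List.map_append, List.reverse_append]; simp

section EAux

variable {n : ℕ} {E : ZMod n → MulAut (H n)}
  (hE : ∀ i : ZMod n, (E i) (r n (i - 1)) = r n i ∧
      (E i) (r n i) = r n i * r n (i - 1) * r n i ∧
      ∀ j : ZMod n, j ≠ i - 1 → j ≠ i → (E i) (r n j) = r n j)
include hE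

lemma Einv_a (i : ZMod n) : (E i)⁻¹ (r n i) = r n (i-1) := by
  rw [MulAut.inv_def, MulEquiv.symm_apply_eq, (hE i).1]

lemma Einv_b (i : ZMod n) :
    (E i)⁻¹ (r n (i-1)) = r n (i-1) * r n i * r n (i-1) := by
  rw [MulAut.inv_def, MulEquiv.symm_apply_eq, _root_.map_mul, _root_.map_mul, (hE i).1, (hE i).2.1]
  simp [mul_assoc, r_cancel, r_sq]

lemma Einv_c (i j : ZMod n) (h1 : j ≠ i - 1) (h2 : j ≠ i) : (E i)⁻¹ (r n j) = r n j := by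
  rw [MulAut.inv_def, MulEquiv.symm_apply_eq, (hE i).2.2 j h1 h2]

lemma P_spec (hn : 5 ≤ n) : ∀ m, m ≤ n - 1 →
    ((∀ j : ℕ, j < m → Pm E m (r n (j : ZMod n)) = r n ((j+1 : ℕ) : ZMod n)) ∧
     (Pm E m (r n ((m : ℕ) : ZMod n)) = vl n m * r n 0 * (vl n m)⁻¹) ∧
     (∀ j : ℕ, m < j → j < n → Pm E m (r n (j : ZMod n)) = r n (j : ZMod n))) := by
  intro m
  induction m with
  | zero =>
    intro _
    refine ⟨fun j hj => absurd hj (by omega), ?_, fun j _ _ => by simp [Pm_zero]⟩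
    simp [Pm_zero, vl_zero]
  | succ m IH =>
    intro hm
    obtain ⟨IH1, IH2, IH3⟩ := IH (by omega)
    have hmn : m + 1 < n := by omega
    have hsub : ((m+1:ℕ) : ZMod n) - 1 = ((m:ℕ) : ZMod n) := by push_cast; ring
    have hEm := hE ((m+1:ℕ) : ZMod n)
    have hEa : E ((m+1:ℕ):ZMod n) (r n ((m:ℕ):ZMod n)) = r n ((m+1:ℕ):ZMod n) := by
      rw [← hsub]; exact hEm.1
    have happ : ∀ x, Pm E (m+1) x = Pm E m (E ((m+1:ℕ):ZMod n) x) := by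
      intro x; rw [Pm_succ]; rfl
    refine ⟨?_, ?_, ?_⟩
    · intro j hj
      rcases Nat.lt_succ_iff_lt_or_eq.mp hj with hj' | rfl
      · rw [happ, hEm.2.2 _ (by rw [hsub]; exact zmod_cast_ne (by omega) (by omega) (by omega))
            (zmod_cast_ne (by omega) (by omega) (by omega)), IH1 j hj']
      · rw [happ, hEa, IH3 (j+1) (by omega) (by omega)]
    · rw [happ, hEm.2.1, _root_.map_mul, _root_.map_mul, hsub, IH3 (m+1) (by omega) hmn, IH2, vl_succ,
        _root_.mul_inv_rev, r_inv]
      simp [mul_assoc]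
    · intro j hj1 hj2
      rw [happ, hEm.2.2 _ (by rw [hsub]; exact zmod_cast_ne (by omega) (by omega) (by omega))
          (zmod_cast_ne (by omega) (by omega) (by omega)), IH3 j (by omega) hj2]

lemma Q_spec (hn : 5 ≤ n) : ∀ m, m ≤ n - 1 →
    ((Qm E m (r n 0) = r n ((m:ℕ) : ZMod n)) ∧
     (∀ j : ℕ, 1 ≤ j → j ≤ m → Qm E m (r n (j : ZMod n)) =
        r n ((m:ℕ):ZMod n) * r n ((j-1:ℕ):ZMod n) * r n ((m:ℕ):ZMod n)) ∧
     (∀ j : ℕ, m < j → j < n → Qm E m (r n (j:ZMod n)) = r n (j:ZMod n))) := by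
  intro m
  induction m with
  | zero =>
    intro _
    refine ⟨by simp [Qm_zero], fun j hj1 hj2 => absurd (hj1.trans hj2) (by omega),
      fun j _ _ => by simp [Qm_zero]⟩
  | succ m IH =>
    intro hm
    obtain ⟨IH1, IH2, IH3⟩ := IH (by omega)
    have hmn : m + 1 < n := by omega
    have hsub : ((m+1:ℕ) : ZMod n) - 1 = ((m:ℕ) : ZMod n) := by push_cast; ring
    have hEm := hE ((m+1:ℕ) : ZMod n)
    have hEa : E ((m+1:ℕ):ZMod n) (r n ((m:ℕ):ZMod n)) = r n ((m+1:ℕ):ZMod n) := by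
      rw [← hsub]; exact hEm.1
    have happ : ∀ x, Qm E (m+1) x = E ((m+1:ℕ):ZMod n) (Qm E m x) := by
      intro x; rw [Qm_succ]; rfl
    refine ⟨?_, ?_, ?_⟩
    · rw [happ, IH1, hEa]
    · intro j hj1 hj2
      rcases Nat.lt_succ_iff_lt_or_eq.mp (Nat.lt_succ_of_le hj2) with hj' | rfl
      · rw [happ, IH2 j hj1 (by omega), _root_.map_mul, _root_.map_mul, hEa,
          hEm.2.2 _ (by rw [hsub]; exact zmod_cast_ne (by omega) (by omega) (by omega))
            (zmod_cast_ne (by omega) (by omega) (by omega))]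
      · rw [happ, IH3 (m+1) (by omega) hmn, hEm.2.1, hsub]
        simp
    · intro j hj1 hj2
      rw [happ, IH3 j (by omega) hj2,
        hEm.2.2 _ (by rw [hsub]; exact zmod_cast_ne (by omega) (by omega) (by omega))
          (zmod_cast_ne (by omega) (by omega) (by omega))]

end EAux

lemma conj_commAut {G : Type*} [Group G] (f : MulAut G) (h : G) :
    f * MulAut.conj h * f⁻¹ = MulAut.conj (f h) := by
  ext x
  simp [MulAut.mul_apply, MulAut.conj_apply, MulAut.inv_def, _root_.map_mul, _root_.map_inv]

lemma zmod_val_cast {n : ℕ} (hn : 5 ≤ n) (i : ZMod n) : ((i.val : ℕ) : ZMod n) = i := by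
  haveI : NeZero n := ⟨by omega⟩
  rw [ZMod.natCast_val, ZMod.cast_id]

lemma sub_one_ne {n : ℕ} (hn : 5 ≤ n) (a : ZMod n) : a - 1 ≠ a := fun h =>
  zmod_one_ne_zero hn (sub_eq_self.mp h)

lemma ne_add_one {n : ℕ} (hn : 5 ≤ n) (a : ZMod n) : a ≠ a + 1 := fun h =>
  zmod_one_ne_zero hn (left_eq_add.mp h)

lemma sub_one_ne_add_one {n : ℕ} (hn : 5 ≤ n) (a : ZMod n) : a - 1 ≠ a + 1 := fun h =>
  zmod_two_ne_zero hn (by linear_combination -h)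

def ws (n : ℕ) : ℕ → H n
  | 0 => 1
  | (k+1) => r n ((k : ℕ) : ZMod n) * ws n k

lemma ws_eq (n : ℕ) : ∀ k, ws n (k+1) = vl n k * r n 0
  | 0 => by simp [ws, vl_zero]
  | (k+1) => by
    rw [show ws n (k+1+1) = r n ((k+1 : ℕ) : ZMod n) * ws n (k+1) from rfl,
      ws_eq n k, vl_succ, mul_assoc]

lemma ws_n {n : ℕ} (hn : 5 ≤ n) : ws n n = 1 := by
  have e : n - 1 + 1 = n := by omega
  have h := ws_eq n (n-1)
  rw [e, vl_pred n hn, r_sq] at h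
  exact h

section SAux

variable {n : ℕ} {E : ZMod n → MulAut (H n)} {S : MulAut (H n)} {Shat : MulAut (H n)}

lemma S_eq (hn : 5 ≤ n)
    (hE : ∀ i : ZMod n, (E i) (r n (i - 1)) = r n i ∧
      (E i) (r n i) = r n i * r n (i - 1) * r n i ∧
      ∀ j : ZMod n, j ≠ i - 1 → j ≠ i → (E i) (r n j) = r n j)
    (hS : ∀ i : ZMod n, S (r n i) = r n (i + 1)) :
    S = Pm E (n - 1) := by
  haveI : NeZero n := ⟨by omega⟩
  obtain ⟨sp1, sp2, sp3⟩ := P_spec hE hn (n-1) le_rfl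
  apply aut_ext
  intro i
  have hv : ((i.val : ℕ) : ZMod n) = i := zmod_val_cast hn i
  have hvlt : i.val < n := ZMod.val_lt i
  rw [hS, ← hv]
  by_cases hlt : i.val < n - 1
  · rw [sp1 i.val hlt]
    congr 1
    push_cast
    ring
  · have hv' : i.val = n - 1 := by omega
    rw [hv', sp2, vl_pred n hn, r_inv, r_sq, one_mul]
    congr 1
    have : ((n - 1 + 1 : ℕ) : ZMod n) = 0 := by
      rw [show n - 1 + 1 = n from by omega]; exact ZMod.natCast_self n
    push_cast at this ⊢
    linear_combination this

lemma Shat_apply (hn : 5 ≤ n)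
    (hE : ∀ i : ZMod n, (E i) (r n (i - 1)) = r n i ∧
      (E i) (r n i) = r n i * r n (i - 1) * r n i ∧
      ∀ j : ZMod n, j ≠ i - 1 → j ≠ i → (E i) (r n j) = r n j)
    (hShat : Shat = Qm E (n - 1)) :
    ∀ j : ZMod n, Shat (r n j) = r n (-1) * r n (j - 1) * r n (-1) := by
  haveI : NeZero n := ⟨by omega⟩
  obtain ⟨sp1, sp2, sp3⟩ := Q_spec hE hn (n-1) le_rfl
  have hm1 : ((n - 1 : ℕ) : ZMod n) = -1 := by
    rw [Nat.cast_sub (by omega : 1 ≤ n), ZMod.natCast_self]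
    simp
  intro j
  by_cases hj : j = 0
  · subst hj
    rw [hShat, sp1, hm1, zero_sub, r_sq, one_mul]
  · have hv : ((j.val : ℕ) : ZMod n) = j := zmod_val_cast hn j
    have hvlt : j.val < n := ZMod.val_lt j
    have hv1 : 1 ≤ j.val := by
      rcases Nat.eq_zero_or_pos j.val with h0 | h1
      · exact absurd (by rw [← hv, h0, Nat.cast_zero]) hj
      · exact h1
    rw [hShat, ← hv, sp2 j.val hv1 (by omega), hm1]
    congr 2
    rw [Nat.cast_sub hv1, hv]
    simp

end SAux

section SAux2

variable {n : ℕ} {S : MulAut (H n)} {Shat : MulAut (H n)}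

lemma Sinv_apply (hS : ∀ i : ZMod n, S (r n i) = r n (i + 1)) (j : ZMod n) :
    S⁻¹ (r n j) = r n (j - 1) := by
  rw [MulAut.inv_def, MulEquiv.symm_apply_eq, hS, sub_add_cancel]

lemma S_pow_apply (hS : ∀ i : ZMod n, S (r n i) = r n (i + 1)) :
    ∀ (k : ℕ) (j : ZMod n), (S ^ k) (r n j) = r n (j + (k : ℕ)) := by
  intro k
  induction k with
  | zero => intro j; simp
  | succ k IH =>
    intro j
    rw [pow_succ, MulAut.mul_apply, hS, IH]
    congr 1
    push_cast
    ring

lemma S_pow_n (hn : 5 ≤ n) (hS : ∀ i : ZMod n, S (r n i) = r n (i + 1)) : S ^ n = 1 := by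
  apply aut_ext
  intro i
  rw [S_pow_apply hS, ZMod.natCast_self, add_zero]
  rfl

lemma Shat_eq2 (hn : 5 ≤ n) (hS : ∀ i : ZMod n, S (r n i) = r n (i + 1))
    (hSh : ∀ j : ZMod n, Shat (r n j) = r n (-1) * r n (j - 1) * r n (-1)) :
    Shat = S⁻¹ * MulAut.conj (r n 0) := by
  apply aut_ext
  intro j
  rw [MulAut.mul_apply, MulAut.conj_apply, hSh, _root_.map_mul, _root_.map_mul, _root_.map_inv,
    Sinv_apply hS, Sinv_apply hS, zero_sub, r_inv]

lemma SShat_conj (hn : 5 ≤ n) (hS : ∀ i : ZMod n, S (r n i) = r n (i + 1))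
    (hSh : ∀ j : ZMod n, Shat (r n j) = r n (-1) * r n (j - 1) * r n (-1)) :
    S * Shat = MulAut.conj (r n 0) := by
  apply aut_ext
  intro j
  rw [MulAut.mul_apply, MulAut.conj_apply, hSh, _root_.map_mul, _root_.map_mul, hS, hS,
    sub_add_cancel, neg_add_cancel, r_inv]

lemma Shat_pow (hn : 5 ≤ n) (hS : ∀ i : ZMod n, S (r n i) = r n (i + 1))
    (hSh : ∀ j : ZMod n, Shat (r n j) = r n (-1) * r n (j - 1) * r n (-1)) :
    ∀ k : ℕ, Shat ^ k = (S ^ k)⁻¹ * MulAut.conj (ws n k) := by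
  intro k
  induction k with
  | zero => simp [ws]
  | succ k IH =>
    have hkey : MulAut.conj (r n ((k : ℕ) : ZMod n)) =
        S ^ k * MulAut.conj (r n 0) * (S ^ k)⁻¹ := by
      rw [conj_commAut, S_pow_apply hS, zero_add]
    rw [pow_succ', IH, Shat_eq2 hn hS hSh,
      show ws n (k+1) = r n ((k : ℕ) : ZMod n) * ws n k from rfl, _root_.map_mul, hkey, pow_succ,
      _root_.mul_inv_rev]
    group

lemma Shat_pow_n (hn : 5 ≤ n) (hS : ∀ i : ZMod n, S (r n i) = r n (i + 1))
    (hSh : ∀ j : ZMod n, Shat (r n j) = r n (-1) * r n (j - 1) * r n (-1)) :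
    Shat ^ n = 1 := by
  rw [Shat_pow hn hS hSh n, ws_n hn, S_pow_n hn hS, _root_.map_one, inv_one, mul_one]

end SAux2

/-- the standard relations in `Aut H_n` among the Dehn twists `E_i`, the
shift `S`, `Ŝ`, the inner automorphisms and `J`; in particular all inner automorphisms
lie in `Aut⁺H_n`. -/
theorem aut_relations (n : ℕ) (hn : 5 ≤ n)
    (E : ZMod n → MulAut (H n))
    (hE : ∀ i : ZMod n, (E i) (r n (i - 1)) = r n i ∧
      (E i) (r n i) = r n i * r n (i - 1) * r n i ∧
      ∀ j : ZMod n, j ≠ i - 1 → j ≠ i → (E i) (r n j) = r n j)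
    (S : MulAut (H n)) (hS : ∀ i : ZMod n, S (r n i) = r n (i + 1))
    (Jaut : MulAut (H n)) (hJ : ∀ i : ZMod n, Jaut (r n i) = r n (-i))
    (Shat : MulAut (H n))
    (hShat : Shat =
      (((List.range (n - 1)).map (fun k => E ((k + 1 : ℕ) : ZMod n))).reverse).prod) :
    S = ((List.range (n - 1)).map (fun k => E ((k + 1 : ℕ) : ZMod n))).prod ∧
    (∀ i : ZMod n, S * E i * S⁻¹ = E (i + 1)) ∧
    S ^ n = 1 ∧ Shat ^ n = 1 ∧ S * Shat * S * Shat = 1 ∧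
    MulAut.conj (r n 0) = S * Shat ∧
    MulAut.conj (r n 1) =
      (((List.range (n - 1)).map (fun k => E ((k + 1 : ℕ) : ZMod n))) ++ [E 0] ++
        (((List.range (n - 2)).map (fun k => E ((k + 2 : ℕ) : ZMod n))).reverse)).prod ∧
    (∀ i : ZMod n, E i * E (i + 1) * E i = E (i + 1) * E i * E (i + 1)) ∧
    (∀ i j : ZMod n, Disjoint ({i - 1, i} : Set (ZMod n)) ({j - 1, j} : Set (ZMod n)) →
      E i * E j = E j * E i) ∧
    (∀ i : ZMod n, Jaut * E i * Jaut⁻¹ = (E (1 - i))⁻¹) ∧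
    Jaut * Jaut = 1 ∧
    (∀ h : H n, MulAut.conj h ∈ Subgroup.closure (Set.range E)) := by
  haveI : NeZero n := ⟨by omega⟩
  have hSeq : S = Pm E (n - 1) := S_eq hn hE hS
  have hShQ : Shat = Qm E (n - 1) := hShat
  have hSh := Shat_apply hn hE hShQ
  have p3 : S ^ n = 1 := S_pow_n hn hS
  have p4 : Shat ^ n = 1 := Shat_pow_n hn hS hSh
  have p6 : MulAut.conj (r n 0) = S * Shat := (SShat_conj hn hS hSh).symm
  have p5 : S * Shat * S * Shat = 1 := by
    have h : S * Shat * S * Shat = (S * Shat) * (S * Shat) := by group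
    rw [h, ← p6, ← _root_.map_mul, r_sq, _root_.map_one]
  -- part 2
  have p2 : ∀ i : ZMod n, S * E i * S⁻¹ = E (i + 1) := by
    intro i
    have h21 : E (i+1) (r n i) = r n (i+1) := by
      have h := (hE (i+1)).1; rwa [add_sub_cancel_right] at h
    have h22 : E (i+1) (r n (i+1)) = r n (i+1) * r n i * r n (i+1) := by
      have h := (hE (i+1)).2.1; rwa [add_sub_cancel_right] at h
    have h23 : ∀ k : ZMod n, k ≠ i → k ≠ i + 1 → E (i+1) (r n k) = r n k :=
      fun k hk1 hk2 => (hE (i+1)).2.2 k (by rwa [add_sub_cancel_right]) hk2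
    apply aut_ext
    intro j
    have happ : (S * E i * S⁻¹) (r n j) = S (E i (S⁻¹ (r n j))) := rfl
    rw [happ, Sinv_apply hS]
    by_cases hj1 : j = i
    · subst hj1
      rw [(hE j).1, hS, h21]
    · by_cases hj2 : j = i + 1
      · subst hj2
        rw [add_sub_cancel_right, (hE i).2.1, h22]
        simp only [_root_.map_mul, hS, sub_add_cancel]
      · rw [(hE i).2.2 (j-1) (fun h => hj1 (sub_left_inj.mp h))
            (fun h => hj2 (by rw [← h, sub_add_cancel])), hS, sub_add_cancel,
          h23 j hj1 hj2]
  -- part 7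
  have p7 : MulAut.conj (r n 1) =
      (((List.range (n - 1)).map (fun k => E ((k + 1 : ℕ) : ZMod n))) ++ [E 0] ++
        (((List.range (n - 2)).map (fun k => E ((k + 2 : ℕ) : ZMod n))).reverse)).prod := by
    have hBlist : (List.range (n-1)).map (fun k => E ((k+1:ℕ) : ZMod n)) =
        E ((1:ℕ) : ZMod n) :: (List.range (n-2)).map (fun k => E ((k+2:ℕ) : ZMod n)) := by
      rw [show n - 1 = (n-2)+1 from by omega, List.range_succ_eq_map, List.map_cons,
        List.map_map]
      rfl
    have hShat2 : Shat =
        (((List.range (n-2)).map (fun k => E ((k+2:ℕ) : ZMod n))).reverse).prod * E 1 := by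
      rw [hShat, hBlist, List.reverse_cons, List.prod_append, List.prod_singleton]
      norm_num
    have hBprod : (((List.range (n-2)).map (fun k => E ((k+2:ℕ) : ZMod n))).reverse).prod =
        Shat * (E 1)⁻¹ := by
      rw [hShat2]; group
    have hSeq' : ((List.range (n - 1)).map (fun k => E ((k + 1 : ℕ) : ZMod n))).prod = S :=
      hSeq.symm
    rw [List.prod_append, List.prod_append, List.prod_singleton, hBprod, hSeq']
    apply aut_ext
    intro j
    have happ : (S * E 0 * (Shat * (E 1)⁻¹)) (r n j) = S (E 0 (Shat ((E 1)⁻¹ (r n j)))) := rfl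
    have hE0a : E 0 (r n (-1)) = r n 0 := by have h := (hE 0).1; rwa [zero_sub] at h
    have hE0b : E 0 (r n 0) = r n 0 * r n (-1) * r n 0 := by
      have h := (hE 0).2.1; rwa [zero_sub] at h
    rw [happ, MulAut.conj_apply, r_inv]
    by_cases hj0 : j = 0
    · subst hj0
      have e1 : (E 1)⁻¹ (r n 0) = r n 0 * r n 1 * r n 0 := by
        have h := Einv_b hE 1; rwa [sub_self] at h
      have e2 : Shat (r n 0 * r n 1 * r n 0) = r n 0 := by
        simp only [_root_.map_mul, hSh, zero_sub, sub_self]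
        simp [mul_assoc, r_cancel, r_sq]
      rw [e1, e2, hE0b]
      simp only [_root_.map_mul, hS, zero_add, neg_add_cancel]
    · by_cases hj1 : j = 1
      · subst hj1
        have e1 : (E 1)⁻¹ (r n 1) = r n 0 := by
          have h := Einv_a hE 1; rwa [sub_self] at h
        have e2 : Shat (r n 0) = r n (-1) := by
          rw [hSh, zero_sub, r_sq, one_mul]
        rw [e1, e2, hE0a, hS, zero_add, r_sq, one_mul]
      · have e1 : (E 1)⁻¹ (r n j) = r n j :=
          Einv_c hE 1 j (by rwa [sub_self]) hj1
        have e3 : E 0 (r n (j - 1)) = r n (j - 1) :=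
          (hE 0).2.2 (j-1) (by rw [zero_sub]; intro h; exact hj0 (by linear_combination h))
            (fun h => hj1 (by linear_combination h))
        rw [e1, hSh]
        simp only [_root_.map_mul, hE0a, e3, hS, zero_add, sub_add_cancel]
  -- part 8
  have p8 : ∀ i : ZMod n, E i * E (i + 1) * E i = E (i + 1) * E i * E (i + 1) := by
    intro i
    have hia : i - 1 ≠ i := sub_one_ne hn i
    have hib : i ≠ i + 1 := ne_add_one hn i
    have hic : i - 1 ≠ i + 1 := sub_one_ne_add_one hn i
    have f1 : E i (r n (i-1)) = r n i := (hE i).1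
    have f2 : E i (r n i) = r n i * r n (i-1) * r n i := (hE i).2.1
    have f3 : E i (r n (i+1)) = r n (i+1) := (hE i).2.2 _ (Ne.symm hic) (Ne.symm hib)
    have g1 : E (i+1) (r n i) = r n (i+1) := by
      have h := (hE (i+1)).1; rwa [add_sub_cancel_right] at h
    have g2 : E (i+1) (r n (i+1)) = r n (i+1) * r n i * r n (i+1) := by
      have h := (hE (i+1)).2.1; rwa [add_sub_cancel_right] at h
    have g3 : E (i+1) (r n (i-1)) = r n (i-1) :=
      (hE (i+1)).2.2 _ (by rwa [add_sub_cancel_right]) hic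
    apply aut_ext
    intro k
    have e1 : (E i * E (i+1) * E i) (r n k) = E i (E (i+1) (E i (r n k))) := rfl
    have e2 : (E (i+1) * E i * E (i+1)) (r n k) = E (i+1) (E i (E (i+1) (r n k))) := rfl
    rw [e1, e2]
    by_cases hk1 : k = i - 1
    · rw [hk1]
      simp only [_root_.map_mul, f1, f2, f3, g1, g2, g3]
    · by_cases hk2 : k = i
      · rw [hk2]
        simp only [_root_.map_mul, f1, f2, f3, g1, g2, g3]
      · by_cases hk3 : k = i + 1
        · rw [hk3]
          simp only [_root_.map_mul, f1, f2, f3, g1, g2, g3]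
          simp [mul_assoc, r_cancel, r_sq]
        · have f4 : E i (r n k) = r n k := (hE i).2.2 k hk1 hk2
          have g4 : E (i+1) (r n k) = r n k :=
            (hE (i+1)).2.2 k (by rwa [add_sub_cancel_right]) hk3
          simp only [f4, g4]
  -- part 9
  have p9 : ∀ i j : ZMod n, Disjoint ({i - 1, i} : Set (ZMod n)) ({j - 1, j} : Set (ZMod n)) →
      E i * E j = E j * E i := by
    intro i j hd
    have hd' := Set.disjoint_left.mp hd
    have dA : (i - 1 : ZMod n) ∉ ({j - 1, j} : Set (ZMod n)) := hd' (by simp)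
    have dB : (i : ZMod n) ∉ ({j - 1, j} : Set (ZMod n)) := hd' (by simp)
    have d1 : i - 1 ≠ j - 1 := fun h => dA (by simp [h])
    have d2 : i - 1 ≠ j := fun h => dA (by simp [h])
    have d3 : i ≠ j - 1 := fun h => dB (by simp [h])
    have d4 : i ≠ j := fun h => dB (by simp [h])
    have fi1 : E j (r n (i - 1)) = r n (i - 1) := (hE j).2.2 _ d1 d2
    have fi2 : E j (r n i) = r n i := (hE j).2.2 _ d3 d4
    have fj1 : E i (r n (j - 1)) = r n (j - 1) := (hE i).2.2 _ (Ne.symm d1) (Ne.symm d3)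
    have fj2 : E i (r n j) = r n j := (hE i).2.2 _ (Ne.symm d2) (Ne.symm d4)
    apply aut_ext
    intro k
    have e1 : (E i * E j) (r n k) = E i (E j (r n k)) := rfl
    have e2 : (E j * E i) (r n k) = E j (E i (r n k)) := rfl
    rw [e1, e2]
    by_cases hk1 : k = i - 1
    · rw [hk1, fi1, (hE i).1, fi2]
    · by_cases hk2 : k = i
      · rw [hk2, fi2, (hE i).2.1]
        simp only [_root_.map_mul, fi1, fi2]
      · by_cases hk3 : k = j - 1
        · rw [hk3, (hE j).1, fj2, fj1, (hE j).1]
        · by_cases hk4 : k = j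
          · rw [hk4, (hE j).2.1, fj2]
            simp only [_root_.map_mul, fj1, fj2, (hE j).2.1]
          · simp only [(hE j).2.2 k hk3 hk4, (hE i).2.2 k hk1 hk2]
  -- part 10
  have hJinv : ∀ j : ZMod n, Jaut⁻¹ (r n j) = r n (-j) := fun j => by
    rw [MulAut.inv_def, MulEquiv.symm_apply_eq, hJ, neg_neg]
  have p10 : ∀ i : ZMod n, Jaut * E i * Jaut⁻¹ = (E (1 - i))⁻¹ := by
    intro i
    apply aut_ext
    intro j
    have happ : (Jaut * E i * Jaut⁻¹) (r n j) = Jaut (E i (Jaut⁻¹ (r n j))) := rfl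
    rw [happ, hJinv]
    by_cases h1 : j = 1 - i
    · subst h1
      rw [show -(1 - i) = i - 1 from by ring, (hE i).1, hJ, Einv_a hE (1-i),
        show (1 : ZMod n) - i - 1 = -i from by ring]
    · by_cases h2 : j = -i
      · subst h2
        rw [neg_neg, (hE i).2.1]
        simp only [_root_.map_mul, hJ]
        rw [show -(i-1) = 1 - i from by ring,
          show (-i : ZMod n) = 1 - i - 1 from by ring, Einv_b hE (1-i)]
      · rw [(hE i).2.2 (-j) (fun h => h1 (by linear_combination -h))
            (fun h => h2 (by linear_combination -h)), hJ, neg_neg,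
          Einv_c hE (1-i) j (fun h => h2 (by linear_combination h)) h1]
  -- part 11
  have p11 : Jaut * Jaut = 1 := by
    apply aut_ext
    intro j
    have happ : (Jaut * Jaut) (r n j) = Jaut (Jaut (r n j)) := rfl
    rw [happ, hJ, hJ, neg_neg]
    rfl
  -- part 12
  have p12 : ∀ h : H n, MulAut.conj h ∈ Subgroup.closure (Set.range E) := by
    have hSK : S ∈ Subgroup.closure (Set.range E) := by
      rw [hSeq]
      apply list_prod_mem
      intro x hx
      obtain ⟨k, -, rfl⟩ := List.mem_map.mp hx
      exact Subgroup.subset_closure ⟨_, rfl⟩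
    have hShK : Shat ∈ Subgroup.closure (Set.range E) := by
      rw [hShQ]
      apply list_prod_mem
      intro x hx
      rw [List.mem_reverse] at hx
      obtain ⟨k, -, rfl⟩ := List.mem_map.mp hx
      exact Subgroup.subset_closure ⟨_, rfl⟩
    have hc0 : MulAut.conj (r n 0) ∈ Subgroup.closure (Set.range E) := by
      rw [p6]; exact mul_mem hSK hShK
    have hcGen : ∀ i : ZMod n, MulAut.conj (r n i) ∈ Subgroup.closure (Set.range E) := by
      intro i
      have hcc : MulAut.conj (r n i) = S ^ i.val * MulAut.conj (r n 0) * (S ^ i.val)⁻¹ := by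
        rw [conj_commAut, S_pow_apply hS, zero_add, zmod_val_cast hn]
      rw [hcc]
      exact mul_mem (mul_mem (pow_mem hSK _) hc0) (inv_mem (pow_mem hSK _))
    intro h
    have hmem := PresentedGroup.generated_by (Hrels n)
      (Subgroup.comap (MulAut.conj : H n →* MulAut (H n)) (Subgroup.closure (Set.range E)))
      (fun j => Subgroup.mem_comap.mpr (hcGen j)) h
    exact Subgroup.mem_comap.mp hmem
  exact ⟨hSeq, p2, p3, p4, p5, p6, p7, p8, p9, p10, p11, p12⟩

end HView
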